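/- Every n-strand Brauer diagram d of rank s = n − 2f admits a unique factorization d = α (d₀ ⊙ d₁) β*, where α and β are (2f, s)-shuffle permutations (regarded as permutation diagrams), d₀ is a 2f-strand Brauer diagram of rank 0, d₁ is an s-strand permutation diagram, and ⊙ denotes horizontal juxtaposition of diagrams. -/

import Mathlib

/-- An `m`-strand Brauer diagram, modelled as a fixed-point-free involution of the `2m`
vertices `Fin m ⊕ Fin m` (`inl` = top vertices, `inr` = bottom vertices). -/
def IsBrauerMatching {m : ℕ} (d : Equiv.Perm (Fin m ⊕ Fin m)) : Prop :=
  (∀ x, d (d x) = x) ∧ ∀ x, d x ≠ x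

/-- The rank of a Brauer diagram: the number of through strands. -/
def diagRank {m : ℕ} (d : Equiv.Perm (Fin m ⊕ Fin m)) : ℕ :=
  (Finset.univ.filter fun i : Fin m => ∃ j : Fin m, d (Sum.inl i) = Sum.inr j).card

/-- A `(k, n-k)`-shuffle: a permutation increasing on `{0, …, k-1}` and on `{k, …, n-1}`. -/
def IsShuffle (n k : ℕ) (π : Equiv.Perm (Fin n)) : Prop :=
  ∀ i j : Fin n, i < j →
    (((i : ℕ) < k ∧ (j : ℕ) < k) ∨ (k ≤ (i : ℕ) ∧ k ≤ (j : ℕ))) → π i < π j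

/-- The permutation diagram of `π`, connecting top vertex `i` with bottom vertex `π i`. -/
def permDiag {s : ℕ} (π : Equiv.Perm (Fin s)) : Equiv.Perm (Fin s ⊕ Fin s) :=
  (Equiv.sumComm (Fin s) (Fin s)).trans (Equiv.sumCongr π⁻¹ π)

/-- Horizontal juxtaposition `d₀ ⊙ d₁` of an `a`-strand diagram and a `b`-strand diagram. -/
def juxt {a b : ℕ} (d₀ : Equiv.Perm (Fin a ⊕ Fin a)) (d₁ : Equiv.Perm (Fin b ⊕ Fin b)) :
    Equiv.Perm (Fin (a + b) ⊕ Fin (a + b)) :=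
  ((Equiv.sumSumSumComm (Fin a) (Fin a) (Fin b) (Fin b)).trans
      (Equiv.sumCongr finSumFinEquiv finSumFinEquiv)).permCongr
    (Equiv.sumCongr d₀ d₁)

namespace Stmt18
open Equiv Sum

lemma exists_sumCongr_of_maps {A B : Type*} (e : Equiv.Perm (A ⊕ B))
    (h1 : ∀ a, ∃ a', e (inl a) = inl a') (h2 : ∀ b, ∃ b', e (inr b) = inr b') :
    ∃ (e₁ : Equiv.Perm A) (e₂ : Equiv.Perm B), e = Equiv.sumCongr e₁ e₂ := by
  have h1' : ∀ a, ∃ a', e.symm (inl a) = inl a' := by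
    intro a
    rcases h' : e.symm (inl a) with a' | b'
    · exact ⟨a', rfl⟩
    · exfalso
      obtain ⟨b'', hb⟩ := h2 b'
      have := e.apply_symm_apply (inl a)
      rw [h', hb] at this
      simp at this
  have h2' : ∀ b, ∃ b', e.symm (inr b) = inr b' := by
    intro b
    rcases h' : e.symm (inr b) with a' | b'
    · exfalso
      obtain ⟨a'', ha⟩ := h1 a'
      have := e.apply_symm_apply (inr b)
      rw [h', ha] at this
      simp at this
    · exact ⟨b', rfl⟩
  refine ⟨⟨fun a => (h1 a).choose, fun a => (h1' a).choose, ?_, ?_⟩,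
          ⟨fun b => (h2 b).choose, fun b => (h2' b).choose, ?_, ?_⟩, ?_⟩
  · intro a
    have : inl (α := A) (β := B) ((h1' ((h1 a).choose)).choose) = inl a := by
      rw [← (h1' _).choose_spec, ← (h1 a).choose_spec, e.symm_apply_apply]
    exact inl_injective this
  · intro a
    have : inl (α := A) (β := B) ((h1 ((h1' a).choose)).choose) = inl a := by
      rw [← (h1 _).choose_spec, ← (h1' a).choose_spec, e.apply_symm_apply]
    exact inl_injective this
  · intro b
    have : inr (α := A) (β := B) ((h2' ((h2 b).choose)).choose) = inr b := by
      rw [← (h2' _).choose_spec, ← (h2 b).choose_spec, e.symm_apply_apply]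
    exact inr_injective this
  · intro b
    have : inr (α := A) (β := B) ((h2 ((h2' b).choose)).choose) = inr b := by
      rw [← (h2 _).choose_spec, ← (h2' b).choose_spec, e.apply_symm_apply]
    exact inr_injective this
  · ext x
    rcases x with a | b
    · simp only [Equiv.sumCongr_apply, Sum.map_inl]
      exact (h1 a).choose_spec
    · simp only [Equiv.sumCongr_apply, Sum.map_inr]
      exact (h2 b).choose_spec

lemma eq_permDiag {s : ℕ} (e : Equiv.Perm (Fin s ⊕ Fin s)) (hinv : ∀ x, e (e x) = x)
    (h1 : ∀ b, ∃ b', e (inl b) = inr b') (h2 : ∀ b, ∃ b', e (inr b) = inl b') :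
    ∃ π : Equiv.Perm (Fin s), e = permDiag π := by
  obtain ⟨π₁, π₂, h⟩ := exists_sumCongr_of_maps (e.trans (Equiv.sumComm _ _))
    (fun b => by obtain ⟨b', hb⟩ := h1 b; exact ⟨b', by simp [hb]⟩)
    (fun b => by obtain ⟨b', hb⟩ := h2 b; exact ⟨b', by simp [hb]⟩)
  have he1 : ∀ b, e (inl b) = inr (π₁ b) := by
    intro b
    have hb : (Equiv.sumComm (Fin s) (Fin s)) (e (inl b)) = inl (π₁ b) := by
      rw [← Equiv.trans_apply, h]; rfl
    have := congrArg (Equiv.sumComm (Fin s) (Fin s)).symm hb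
    simpa using this
  have he2 : ∀ b, e (inr b) = inl (π₂ b) := by
    intro b
    have hb : (Equiv.sumComm (Fin s) (Fin s)) (e (inr b)) = inr (π₂ b) := by
      rw [← Equiv.trans_apply, h]; rfl
    have := congrArg (Equiv.sumComm (Fin s) (Fin s)).symm hb
    simpa using this
  have hπ : ∀ b, π₁ (π₂ b) = b := by
    intro b
    have := hinv (inr b)
    rw [he2 b, he1 (π₂ b)] at this
    exact inr_injective this
  refine ⟨π₁, Equiv.ext fun x => ?_⟩
  rcases x with b | b
  · rw [he1 b]; simp [permDiag]
  · rw [he2 b]; simp [permDiag]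
    rw [eq_comm, Equiv.symm_apply_eq, hπ]

lemma shuffle_ext {n k : ℕ} (hkn : k ≤ n) (S : Finset (Fin n)) (β₁ β₂ : Equiv.Perm (Fin n))
    (hs₁ : IsShuffle n k β₁) (hs₂ : IsShuffle n k β₂)
    (hm₁ : ∀ i : Fin n, β₁ i ∈ S ↔ k ≤ (i : ℕ)) (hm₂ : ∀ i : Fin n, β₂ i ∈ S ↔ k ≤ (i : ℕ)) :
    β₁ = β₂ := by
  haveI : WellFoundedLT (Fin k) := Finite.to_wellFoundedLT
  haveI : WellFoundedLT (Fin (n - k)) := Finite.to_wellFoundedLT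
  have hu : ∀ (β : Equiv.Perm (Fin n)), IsShuffle n k β → (∀ i : Fin n, β i ∈ S ↔ k ≤ (i : ℕ)) →
      (StrictMono (fun a : Fin k => β (Fin.castLE hkn a)) ∧
       Set.range (fun a : Fin k => β (Fin.castLE hkn a)) = {x | x ∉ S}) := by
    intro β hs hm
    constructor
    · intro a b hab
      exact hs _ _ hab (Or.inl ⟨a.isLt, b.isLt⟩)
    · ext y
      constructor
      · rintro ⟨a, rfl⟩
        simp only [Set.mem_setOf_eq]
        rw [hm]
        simp [Nat.not_le, a.isLt]
      · intro hy
        have hy' : ¬ k ≤ ((β.symm y : Fin n) : ℕ) := by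
          rw [← hm (β.symm y)]
          simpa using hy
        refine ⟨⟨((β.symm y : Fin n) : ℕ), by omega⟩, β.apply_symm_apply y⟩
  have hv : ∀ (β : Equiv.Perm (Fin n)), IsShuffle n k β → (∀ i : Fin n, β i ∈ S ↔ k ≤ (i : ℕ)) →
      (StrictMono (fun a : Fin (n - k) => β ⟨k + (a : ℕ), by omega⟩) ∧
       Set.range (fun a : Fin (n - k) => β ⟨k + (a : ℕ), by omega⟩) = {x | x ∈ S}) := by
    intro β hs hm
    constructor
    · intro a b hab
      have hab' : (a : ℕ) < (b : ℕ) := hab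
      exact hs _ _ (Fin.mk_lt_mk.mpr (by omega)) (Or.inr ⟨by simp, by simp⟩)
    · ext y
      constructor
      · rintro ⟨a, rfl⟩
        simp only [Set.mem_setOf_eq]
        rw [hm]
        simp
      · intro hy
        have hy' : k ≤ ((β.symm y : Fin n) : ℕ) := by
          rw [← hm (β.symm y)]
          simpa using hy
        refine ⟨⟨((β.symm y : Fin n) : ℕ) - k, by omega⟩, ?_⟩
        have hc : (⟨k + (((β.symm y : Fin n) : ℕ) - k), by omega⟩ : Fin n) = β.symm y := by
          ext; simp; omega
        show β (⟨k + (((β.symm y : Fin n) : ℕ) - k), by omega⟩ : Fin n) = y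
        rw [hc]
        simp
  obtain ⟨hmo1, hr1⟩ := hu β₁ hs₁ hm₁
  obtain ⟨hmo2, hr2⟩ := hu β₂ hs₂ hm₂
  obtain ⟨hmo1', hr1'⟩ := hv β₁ hs₁ hm₁
  obtain ⟨hmo2', hr2'⟩ := hv β₂ hs₂ hm₂
  have e1 := (hmo1.range_inj hmo2).mp (hr1.trans hr2.symm)
  have e2 := (hmo1'.range_inj hmo2').mp (hr1'.trans hr2'.symm)
  apply Equiv.ext
  intro i
  rcases lt_or_ge ((i : ℕ)) k with h | h
  · exact congrFun e1 ⟨(i : ℕ), h⟩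
  · have h3 : β₁ (⟨k + ((i : ℕ) - k), by omega⟩ : Fin n) = β₂ ⟨k + ((i : ℕ) - k), by omega⟩ :=
      congrFun e2 ⟨(i : ℕ) - k, by omega⟩
    have hc : (⟨k + ((i : ℕ) - k), by omega⟩ : Fin n) = i := by
      ext; simp; omega
    rwa [hc] at h3

lemma juxt_map_castAdd {a b : ℕ} (d₀ : Equiv.Perm (Fin a ⊕ Fin a))
    (d₁ : Equiv.Perm (Fin b ⊕ Fin b)) (z : Fin a ⊕ Fin a) :
    juxt d₀ d₁ (Sum.map (Fin.castAdd b) (Fin.castAdd b) z) =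
      Sum.map (Fin.castAdd b) (Fin.castAdd b) (d₀ z) := by
  rcases z with x | x <;>
  · simp only [juxt, Equiv.permCongr_apply, Equiv.trans_apply, Sum.map_inl, Sum.map_inr,
      Equiv.symm_trans_apply, Equiv.sumCongr_symm, Equiv.sumCongr_apply,
      Equiv.sumSumSumComm_symm, finSumFinEquiv_symm_apply_castAdd]
    rcases h : d₀ (inl x) <;> rcases h' : d₀ (inr x) <;>
      simp [h, h', Equiv.sumSumSumComm]

lemma juxt_map_natAdd {a b : ℕ} (d₀ : Equiv.Perm (Fin a ⊕ Fin a))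
    (d₁ : Equiv.Perm (Fin b ⊕ Fin b)) (z : Fin b ⊕ Fin b) :
    juxt d₀ d₁ (Sum.map (Fin.natAdd a) (Fin.natAdd a) z) =
      Sum.map (Fin.natAdd a) (Fin.natAdd a) (d₁ z) := by
  rcases z with x | x <;>
  · simp only [juxt, Equiv.permCongr_apply, Equiv.trans_apply, Sum.map_inl, Sum.map_inr,
      Equiv.symm_trans_apply, Equiv.sumCongr_symm, Equiv.sumCongr_apply,
      Equiv.sumSumSumComm_symm, finSumFinEquiv_symm_apply_natAdd]
    rcases h : d₁ (inl x) <;> rcases h' : d₁ (inr x) <;>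
      simp [h, h', Equiv.sumSumSumComm]

lemma permDiag_inl {s : ℕ} (π : Equiv.Perm (Fin s)) (b : Fin s) :
    permDiag π (inl b) = inr (π b) := rfl
lemma permDiag_inr {s : ℕ} (π : Equiv.Perm (Fin s)) (b : Fin s) :
    permDiag π (inr b) = inl (π⁻¹ b) := rfl

lemma rank0_facts {m : ℕ} (d₀ : Equiv.Perm (Fin m ⊕ Fin m))
    (h0 : ∀ x, d₀ (d₀ x) = x) (hr0 : diagRank d₀ = 0) :
    (∀ a, ∃ a', d₀ (inl a) = inl a') ∧ (∀ a, ∃ a', d₀ (inr a) = inr a') := by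
  have hno : ∀ a : Fin m, ¬ ∃ j, d₀ (inl a) = inr j := by
    intro a hj
    have h1 := Finset.card_eq_zero.mp hr0
    have h2 : a ∈ (Finset.univ.filter fun i : Fin m => ∃ j, d₀ (Sum.inl i) = Sum.inr j) := by
      simp only [Finset.mem_filter, Finset.mem_univ, true_and]
      exact hj
    rw [h1] at h2
    simp at h2
  constructor
  · intro a
    rcases h : d₀ (inl a) with a' | j
    · exact ⟨a', rfl⟩
    · exact absurd ⟨j, h⟩ (hno a)
  · intro a
    rcases h : d₀ (inr a) with c | a'
    · exfalso
      have : d₀ (inl c) = inr a := by rw [← h, h0]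
      exact hno c ⟨a, this⟩
    · exact ⟨a', rfl⟩

lemma factor_spec (f s : ℕ) (d : Equiv.Perm (Fin (2 * f + s) ⊕ Fin (2 * f + s)))
    (α' β' : Equiv.Perm (Fin (2 * f + s))) (d₀ : Equiv.Perm (Fin (2 * f) ⊕ Fin (2 * f)))
    (d₁ : Equiv.Perm (Fin s))
    (h0 : ∀ x, d₀ (d₀ x) = x) (hr0 : diagRank d₀ = 0)
    (heq : d = (Equiv.sumCongr β' α').permCongr (juxt d₀ (permDiag d₁))) :
    (∀ i : Fin (2 * f + s), ((∃ j, d (inl (β' i)) = inr j) ↔ 2 * f ≤ (i : ℕ))) ∧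
    (∀ i : Fin (2 * f + s), ((∃ j, d (inr (α' i)) = inl j) ↔ 2 * f ≤ (i : ℕ))) := by
  obtain ⟨hL, hR⟩ := rank0_facts d₀ h0 hr0
  have key : ∀ x, d x = (Equiv.sumCongr β' α') (juxt d₀ (permDiag d₁)
      ((Equiv.sumCongr β' α').symm x)) := by
    intro x; rw [heq]; rfl
  constructor
  · intro i
    rcases lt_or_ge ((i : ℕ)) (2 * f) with h | h
    · set a : Fin (2 * f) := ⟨(i : ℕ), h⟩ with ha
      obtain ⟨a', ha'⟩ := hL a
      have hcomp : d (inl (β' i)) = inl (β' (Fin.castAdd s a')) := by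
        rw [key]
        have h1 : (Equiv.sumCongr β' α').symm (inl (β' i)) = inl i := by simp
        rw [h1]
        have h2 : (inl i : Fin (2 * f + s) ⊕ Fin (2 * f + s)) =
            Sum.map (Fin.castAdd s) (Fin.castAdd s) (inl a) := rfl
        rw [h2, juxt_map_castAdd, ha']
        rfl
      rw [hcomp]
      simp only [reduceCtorEq, exists_false, false_iff]
      omega
    · set b : Fin s := ⟨(i : ℕ) - 2 * f, by omega⟩ with hb
      have hib : i = Fin.natAdd (2 * f) b := by ext; simp [hb]; omega
      have hcomp : d (inl (β' i)) = inr (α' (Fin.natAdd (2 * f) (d₁ b))) := by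
        rw [key]
        have h1 : (Equiv.sumCongr β' α').symm (inl (β' i)) = inl i := by simp
        rw [h1, hib]
        have h2 : (inl (Fin.natAdd (2 * f) b) : Fin (2 * f + s) ⊕ Fin (2 * f + s)) =
            Sum.map (Fin.natAdd (2 * f)) (Fin.natAdd (2 * f)) (inl b) := rfl
        rw [h2, juxt_map_natAdd, permDiag_inl]
        rfl
      rw [hcomp]
      simp only [inr.injEq, exists_eq', true_iff]
      omega
  · intro i
    rcases lt_or_ge ((i : ℕ)) (2 * f) with h | h
    · set a : Fin (2 * f) := ⟨(i : ℕ), h⟩ with ha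
      obtain ⟨a', ha'⟩ := hR a
      have hcomp : d (inr (α' i)) = inr (α' (Fin.castAdd s a')) := by
        rw [key]
        have h1 : (Equiv.sumCongr β' α').symm (inr (α' i)) = inr i := by simp
        rw [h1]
        have h2 : (inr i : Fin (2 * f + s) ⊕ Fin (2 * f + s)) =
            Sum.map (Fin.castAdd s) (Fin.castAdd s) (inr a) := rfl
        rw [h2, juxt_map_castAdd, ha']
        rfl
      rw [hcomp]
      simp only [reduceCtorEq, exists_false, false_iff]
      omega
    · set b : Fin s := ⟨(i : ℕ) - 2 * f, by omega⟩ with hb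
      have hib : i = Fin.natAdd (2 * f) b := by ext; simp [hb]; omega
      have hcomp : d (inr (α' i)) = inl (β' (Fin.natAdd (2 * f) (d₁⁻¹ b))) := by
        rw [key]
        have h1 : (Equiv.sumCongr β' α').symm (inr (α' i)) = inr i := by simp
        rw [h1, hib]
        have h2 : (inr (Fin.natAdd (2 * f) b) : Fin (2 * f + s) ⊕ Fin (2 * f + s)) =
            Sum.map (Fin.natAdd (2 * f)) (Fin.natAdd (2 * f)) (inr b) := rfl
        rw [h2, juxt_map_natAdd, permDiag_inr]
        rfl
      rw [hcomp]
      simp only [inl.injEq, exists_eq', true_iff]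
      omega

end Stmt18

open Equiv Sum Stmt18 in
/-- Every `n`-strand Brauer diagram `d` of rank `s = n - 2f` admits a
unique factorization `d = α (d₀ ⊙ d₁) β*` with `α, β` `(2f, s)`-shuffles, `d₀` a `2f`-strand
diagram of rank `0` and `d₁` an `s`-strand permutation diagram.  (Multiplying on the left by
the permutation diagram of `α` and on the right by that of `β*` relabels the bottom vertices
by `α` and the top vertices by `β`, i.e. conjugates by `sumCongr β α`.) -/
theorem stmt_18 (f s : ℕ) (d : Equiv.Perm (Fin (2 * f + s) ⊕ Fin (2 * f + s)))
    (hd : IsBrauerMatching d) (hrank : diagRank d = s) :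
    ∃! q : Equiv.Perm (Fin (2 * f + s)) × Equiv.Perm (Fin (2 * f + s)) ×
        Equiv.Perm (Fin (2 * f) ⊕ Fin (2 * f)) × Equiv.Perm (Fin s),
      IsShuffle (2 * f + s) (2 * f) q.1 ∧ IsShuffle (2 * f + s) (2 * f) q.2.1 ∧
      IsBrauerMatching q.2.2.1 ∧ diagRank q.2.2.1 = 0 ∧
      d = (Equiv.sumCongr q.2.1 q.1).permCongr (juxt q.2.2.1 (permDiag q.2.2.2)) := by
  obtain ⟨hinv, hfix⟩ := hd
  -- through-strand tops and bottoms
  set T : Finset (Fin (2 * f + s)) :=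
    Finset.univ.filter (fun i : Fin (2 * f + s) => ∃ j, d (Sum.inl i) = Sum.inr j) with hTdef
  set B : Finset (Fin (2 * f + s)) :=
    Finset.univ.filter (fun i : Fin (2 * f + s) => ∃ j, d (Sum.inr i) = Sum.inl j) with hBdef
  have memT : ∀ i, i ∈ T ↔ ∃ j, d (Sum.inl i) = Sum.inr j := by
    intro i; rw [hTdef]; simp
  have memB : ∀ i, i ∈ B ↔ ∃ j, d (Sum.inr i) = Sum.inl j := by
    intro i; rw [hBdef]; simp
  have hT : T.card = s := hrank
  have hTB : T.card = B.card := by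
    apply Finset.card_bij (fun a ha => ((memT a).mp ha).choose)
    · intro a ha
      have hspec := ((memT a).mp ha).choose_spec
      rw [memB]
      exact ⟨a, by rw [← hspec, hinv]⟩
    · intro a₁ ha₁ a₂ ha₂ hEq
      have h1 := ((memT a₁).mp ha₁).choose_spec
      have h2 := ((memT a₂).mp ha₂).choose_spec
      rw [hEq] at h1
      exact inl_injective (d.injective (h1.trans h2.symm))
    · intro b hb
      obtain ⟨j, hj⟩ := (memB b).mp hb
      have hjT : j ∈ T := by
        rw [memT]
        exact ⟨b, by rw [← hj, hinv]⟩
      refine ⟨j, hjT, ?_⟩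
      have hspec := ((memT j).mp hjT).choose_spec
      have hdj : d (Sum.inl j) = Sum.inr b := by rw [← hj, hinv]
      exact inr_injective (hspec.symm.trans hdj)
  have hB : B.card = s := hTB ▸ hT
  have hTc : (Tᶜ).card = 2 * f := by
    rw [Finset.card_compl, hT, Fintype.card_fin]
    omega
  have hBc : (Bᶜ).card = 2 * f := by
    rw [Finset.card_compl, hB, Fintype.card_fin]
    omega
  -- construction of the shuffles
  have mkPerm : ∀ S : Finset (Fin (2 * f + s)), ∀ hSc : (Sᶜ).card = 2 * f, ∀ hS : S.card = s,
      ∃ β : Equiv.Perm (Fin (2 * f + s)), IsShuffle (2 * f + s) (2 * f) β ∧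
        (∀ i, β i ∈ S ↔ 2 * f ≤ (i : ℕ)) := by
    intro S hSc hS
    set g : Fin (2 * f + s) → Fin (2 * f + s) := fun i =>
      if h : (i : ℕ) < 2 * f then (Sᶜ).orderEmbOfFin hSc ⟨(i : ℕ), h⟩
      else S.orderEmbOfFin hS ⟨(i : ℕ) - 2 * f, by omega⟩ with hgdef
    have hgmem : ∀ i : Fin (2 * f + s), if (i : ℕ) < 2 * f then g i ∈ Sᶜ else g i ∈ S := by
      intro i
      by_cases h : (i : ℕ) < 2 * f
      · rw [if_pos h]
        simp only [hgdef, dif_pos h]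
        exact Finset.orderEmbOfFin_mem _ _ _
      · rw [if_neg h]
        simp only [hgdef, dif_neg h]
        exact Finset.orderEmbOfFin_mem _ _ _
    have hginj : Function.Injective g := by
      intro i j hij
      have hi := hgmem i
      have hj := hgmem j
      by_cases h1 : (i : ℕ) < 2 * f <;> by_cases h2 : (j : ℕ) < 2 * f
      · simp only [hgdef, dif_pos h1, dif_pos h2] at hij
        have h3 := ((Sᶜ).orderEmbOfFin hSc).injective hij
        rw [Fin.mk.injEq] at h3
        exact Fin.ext h3
      · rw [if_pos h1] at hi; rw [if_neg h2] at hj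
        rw [hij] at hi
        exact absurd hj (Finset.mem_compl.mp hi)
      · rw [if_neg h1] at hi; rw [if_pos h2] at hj
        rw [hij] at hi
        exact absurd hi (Finset.mem_compl.mp hj)
      · simp only [hgdef, dif_neg h1, dif_neg h2] at hij
        have h3 := (S.orderEmbOfFin hS).injective hij
        rw [Fin.mk.injEq] at h3
        exact Fin.ext (by omega)
    refine ⟨Equiv.ofBijective g ((Finite.injective_iff_bijective).mp hginj), ?_, ?_⟩
    · intro i j hij hcase
      show g i < g j
      rcases hcase with ⟨h1, h2⟩ | ⟨h1, h2⟩
      · simp only [hgdef, dif_pos h1, dif_pos h2]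
        exact ((Sᶜ).orderEmbOfFin hSc).strictMono (Fin.mk_lt_mk.mpr hij)
      · simp only [hgdef, dif_neg (by omega : ¬ (i : ℕ) < 2 * f),
          dif_neg (by omega : ¬ (j : ℕ) < 2 * f)]
        have hij' : (i : ℕ) < (j : ℕ) := hij
        exact (S.orderEmbOfFin hS).strictMono (Fin.mk_lt_mk.mpr (by omega))
    · intro i
      have hi := hgmem i
      show g i ∈ S ↔ 2 * f ≤ (i : ℕ)
      by_cases h : (i : ℕ) < 2 * f
      · rw [if_pos h] at hi
        constructor
        · intro hgi; exact absurd hgi (Finset.mem_compl.mp hi)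
        · intro; omega
      · rw [if_neg h] at hi
        exact ⟨fun _ => by omega, fun _ => hi⟩
  obtain ⟨β, hsβ, hβmem⟩ := mkPerm T hTc hT
  obtain ⟨α, hsα, hαmem⟩ := mkPerm B hBc hB
  have specβ : ∀ i, (∃ j, d (Sum.inl (β i)) = Sum.inr j) ↔ 2 * f ≤ (i : ℕ) := by
    intro i; rw [← memT, hβmem]
  have specα : ∀ i, (∃ j, d (Sum.inr (α i)) = Sum.inl j) ↔ 2 * f ≤ (i : ℕ) := by
    intro i; rw [← memB, hαmem]
  -- the conjugated diagram
  set J : Equiv.Perm (Fin (2 * f + s) ⊕ Fin (2 * f + s)) :=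
    (Equiv.sumCongr β α).trans (d.trans (Equiv.sumCongr β α).symm) with hJdef
  have hJapp : ∀ x, J x = (Equiv.sumCongr β α).symm (d (Equiv.sumCongr β α x)) := fun x => rfl
  have hJinv : ∀ x, J (J x) = x := by
    intro x
    rw [hJapp, hJapp, Equiv.apply_symm_apply, hinv, Equiv.symm_apply_apply]
  -- block behaviour of J
  have J1 : ∀ a : Fin (2 * f), ∃ a' : Fin (2 * f),
      J (Sum.inl (Fin.castAdd s a)) = Sum.inl (Fin.castAdd s a') := by
    intro a
    have h1 : ¬ ∃ j, d (Sum.inl (β (Fin.castAdd s a))) = Sum.inr j := by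
      rw [specβ]
      simp only [Fin.coe_castAdd]
      omega
    rcases hy : d (Sum.inl (β (Fin.castAdd s a))) with y | j
    · have hyd : ¬ ∃ j, d (Sum.inl y) = Sum.inr j := by
        rintro ⟨j, hj⟩
        have hdy : d (Sum.inl y) = Sum.inl (β (Fin.castAdd s a)) := by rw [← hy, hinv]
        rw [hdy] at hj
        simp at hj
      have h2 : ¬ 2 * f ≤ ((β.symm y : Fin (2 * f + s)) : ℕ) := by
        rw [← specβ (β.symm y)]
        simpa using hyd
      refine ⟨⟨((β.symm y : Fin (2 * f + s)) : ℕ), by omega⟩, ?_⟩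
      rw [hJapp]
      simp only [Equiv.sumCongr_apply, Sum.map_inl]
      rw [hy]
      simp only [Equiv.sumCongr_symm, Equiv.sumCongr_apply, Sum.map_inl]
      rfl
    · exact absurd ⟨j, hy⟩ h1
  have J2 : ∀ b : Fin s, ∃ b' : Fin s,
      J (Sum.inl (Fin.natAdd (2 * f) b)) = Sum.inr (Fin.natAdd (2 * f) b') := by
    intro b
    have h1 : ∃ j, d (Sum.inl (β (Fin.natAdd (2 * f) b))) = Sum.inr j := by
      rw [specβ]
      simp
    obtain ⟨j, hj⟩ := h1
    have h2 : 2 * f ≤ ((α.symm j : Fin (2 * f + s)) : ℕ) := by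
      rw [← specα (α.symm j)]
      refine ⟨β (Fin.natAdd (2 * f) b), ?_⟩
      rw [Equiv.apply_symm_apply, ← hj, hinv]
    refine ⟨⟨((α.symm j : Fin (2 * f + s)) : ℕ) - 2 * f, by omega⟩, ?_⟩
    rw [hJapp]
    simp only [Equiv.sumCongr_apply, Sum.map_inl]
    rw [hj]
    simp only [Equiv.sumCongr_symm, Equiv.sumCongr_apply, Sum.map_inr]
    congr 1
    ext
    simp
    omega
  have J3 : ∀ a : Fin (2 * f), ∃ a' : Fin (2 * f),
      J (Sum.inr (Fin.castAdd s a)) = Sum.inr (Fin.castAdd s a') := by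
    intro a
    have h1 : ¬ ∃ j, d (Sum.inr (α (Fin.castAdd s a))) = Sum.inl j := by
      rw [specα]
      simp only [Fin.coe_castAdd]
      omega
    rcases hy : d (Sum.inr (α (Fin.castAdd s a))) with j | y
    · exact absurd ⟨j, hy⟩ h1
    · have hyd : ¬ ∃ j, d (Sum.inr y) = Sum.inl j := by
        rintro ⟨j, hj⟩
        have hdy : d (Sum.inr y) = Sum.inr (α (Fin.castAdd s a)) := by rw [← hy, hinv]
        rw [hdy] at hj
        simp at hj
      have h2 : ¬ 2 * f ≤ ((α.symm y : Fin (2 * f + s)) : ℕ) := by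
        rw [← specα (α.symm y)]
        simpa using hyd
      refine ⟨⟨((α.symm y : Fin (2 * f + s)) : ℕ), by omega⟩, ?_⟩
      rw [hJapp]
      simp only [Equiv.sumCongr_apply, Sum.map_inr]
      rw [hy]
      simp only [Equiv.sumCongr_symm, Equiv.sumCongr_apply, Sum.map_inr]
      rfl
  have J4 : ∀ b : Fin s, ∃ b' : Fin s,
      J (Sum.inr (Fin.natAdd (2 * f) b)) = Sum.inl (Fin.natAdd (2 * f) b') := by
    intro b
    have h1 : ∃ j, d (Sum.inr (α (Fin.natAdd (2 * f) b))) = Sum.inl j := by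
      rw [specα]
      simp
    obtain ⟨j, hj⟩ := h1
    have h2 : 2 * f ≤ ((β.symm j : Fin (2 * f + s)) : ℕ) := by
      rw [← specβ (β.symm j)]
      refine ⟨α (Fin.natAdd (2 * f) b), ?_⟩
      rw [Equiv.apply_symm_apply, ← hj, hinv]
    refine ⟨⟨((β.symm j : Fin (2 * f + s)) : ℕ) - 2 * f, by omega⟩, ?_⟩
    rw [hJapp]
    simp only [Equiv.sumCongr_apply, Sum.map_inr]
    rw [hj]
    simp only [Equiv.sumCongr_symm, Equiv.sumCongr_apply, Sum.map_inl]
    congr 1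
    ext
    simp
    omega
  -- move to the four-block picture
  set E : (Fin (2 * f) ⊕ Fin (2 * f)) ⊕ (Fin s ⊕ Fin s) ≃
      Fin (2 * f + s) ⊕ Fin (2 * f + s) :=
    ((Equiv.sumSumSumComm (Fin (2 * f)) (Fin (2 * f)) (Fin s) (Fin s)).trans
      (Equiv.sumCongr finSumFinEquiv finSumFinEquiv)) with hEdef
  have hE1 : ∀ a : Fin (2 * f), E (Sum.inl (Sum.inl a)) = Sum.inl (Fin.castAdd s a) := by
    intro a; simp [hEdef, Equiv.sumSumSumComm]
  have hE2 : ∀ a : Fin (2 * f), E (Sum.inl (Sum.inr a)) = Sum.inr (Fin.castAdd s a) := by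
    intro a; simp [hEdef, Equiv.sumSumSumComm]
  have hE3 : ∀ b : Fin s, E (Sum.inr (Sum.inl b)) = Sum.inl (Fin.natAdd (2 * f) b) := by
    intro b; simp [hEdef, Equiv.sumSumSumComm]
  have hE4 : ∀ b : Fin s, E (Sum.inr (Sum.inr b)) = Sum.inr (Fin.natAdd (2 * f) b) := by
    intro b; simp [hEdef, Equiv.sumSumSumComm]
  set K : Equiv.Perm ((Fin (2 * f) ⊕ Fin (2 * f)) ⊕ (Fin s ⊕ Fin s)) :=
    E.trans (J.trans E.symm) with hKdef
  have hKapp : ∀ x, K x = E.symm (J (E x)) := fun x => rfl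
  have hKinv : ∀ x, K (K x) = x := by
    intro x
    rw [hKapp, hKapp, Equiv.apply_symm_apply, hJinv, Equiv.symm_apply_apply]
  have F1 : ∀ a : Fin (2 * f), ∃ a', K (Sum.inl (Sum.inl a)) = Sum.inl (Sum.inl a') := by
    intro a
    obtain ⟨a', ha'⟩ := J1 a
    refine ⟨a', ?_⟩
    rw [hKapp, hE1, ha', ← hE1 a', Equiv.symm_apply_apply]
  have F2 : ∀ a : Fin (2 * f), ∃ a', K (Sum.inl (Sum.inr a)) = Sum.inl (Sum.inr a') := by
    intro a
    obtain ⟨a', ha'⟩ := J3 a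
    refine ⟨a', ?_⟩
    rw [hKapp, hE2, ha', ← hE2 a', Equiv.symm_apply_apply]
  have F3 : ∀ b : Fin s, ∃ b', K (Sum.inr (Sum.inl b)) = Sum.inr (Sum.inr b') := by
    intro b
    obtain ⟨b', hb'⟩ := J2 b
    refine ⟨b', ?_⟩
    rw [hKapp, hE3, hb', ← hE4 b', Equiv.symm_apply_apply]
  have F4 : ∀ b : Fin s, ∃ b', K (Sum.inr (Sum.inr b)) = Sum.inr (Sum.inl b') := by
    intro b
    obtain ⟨b', hb'⟩ := J4 b
    refine ⟨b', ?_⟩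
    rw [hKapp, hE4, hb', ← hE3 b', Equiv.symm_apply_apply]
  obtain ⟨d₀, p, hsum⟩ := exists_sumCongr_of_maps K
    (fun z => by
      rcases z with a | a
      · obtain ⟨a', ha'⟩ := F1 a; exact ⟨Sum.inl a', ha'⟩
      · obtain ⟨a', ha'⟩ := F2 a; exact ⟨Sum.inr a', ha'⟩)
    (fun z => by
      rcases z with b | b
      · obtain ⟨b', hb'⟩ := F3 b; exact ⟨Sum.inr b', hb'⟩
      · obtain ⟨b', hb'⟩ := F4 b; exact ⟨Sum.inl b', hb'⟩)
  have hKsum : ∀ x, K x = Equiv.sumCongr d₀ p x := fun x => by rw [hsum]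
  have hd₀app : ∀ z, Sum.inl (d₀ z) = K (Sum.inl z) := by
    intro z; rw [hKsum]; rfl
  have hpapp : ∀ z, Sum.inr (p z) = K (Sum.inr z) := by
    intro z; rw [hKsum]; rfl
  have hd₀inv : ∀ z, d₀ (d₀ z) = z := by
    intro z
    apply inl_injective (α := Fin (2 * f) ⊕ Fin (2 * f)) (β := Fin s ⊕ Fin s)
    rw [hd₀app, hd₀app, hKinv]
  have hpinv : ∀ z, p (p z) = z := by
    intro z
    apply inr_injective (α := Fin (2 * f) ⊕ Fin (2 * f)) (β := Fin s ⊕ Fin s)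
    rw [hpapp, hpapp, hKinv]
  have hd₀L : ∀ a, ∃ a', d₀ (Sum.inl a) = Sum.inl a' := by
    intro a
    obtain ⟨a', ha'⟩ := F1 a
    refine ⟨a', inl_injective (α := Fin (2 * f) ⊕ Fin (2 * f)) (β := Fin s ⊕ Fin s) ?_⟩
    rw [hd₀app, ha']
  have hpLR : ∀ b, ∃ b', p (Sum.inl b) = Sum.inr b' := by
    intro b
    obtain ⟨b', hb'⟩ := F3 b
    refine ⟨b', inr_injective (α := Fin (2 * f) ⊕ Fin (2 * f)) (β := Fin s ⊕ Fin s) ?_⟩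
    rw [hpapp, hb']
  have hpRL : ∀ b, ∃ b', p (Sum.inr b) = Sum.inl b' := by
    intro b
    obtain ⟨b', hb'⟩ := F4 b
    refine ⟨b', inr_injective (α := Fin (2 * f) ⊕ Fin (2 * f)) (β := Fin s ⊕ Fin s) ?_⟩
    rw [hpapp, hb']
  obtain ⟨d₁, hpd⟩ := eq_permDiag p hpinv hpLR hpRL
  have hd₀fix : ∀ z, d₀ z ≠ z := by
    intro z hz
    have h1 : K (Sum.inl z) = Sum.inl z := by rw [← hd₀app, hz]
    have h2 : J (E (Sum.inl z)) = E (Sum.inl z) := by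
      have := congrArg E h1
      rwa [hKapp, Equiv.apply_symm_apply] at this
    rw [hJapp] at h2
    have h3 := congrArg (Equiv.sumCongr β α) h2
    rw [Equiv.apply_symm_apply] at h3
    exact hfix _ h3
  have hd₀rank : diagRank d₀ = 0 := by
    rw [diagRank, Finset.card_eq_zero, Finset.filter_eq_empty_iff]
    intro a _
    rintro ⟨j, hj⟩
    obtain ⟨a', ha'⟩ := hd₀L a
    rw [ha'] at hj
    simp at hj
  -- the factorization identity
  have hjux : juxt d₀ (permDiag d₁) = E.permCongr K := by
    simp only [juxt]
    rw [← hEdef, ← hpd, ← hsum]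
  have hfinal : d = (Equiv.sumCongr β α).permCongr (juxt d₀ (permDiag d₁)) := by
    rw [hjux]
    apply Equiv.ext
    intro x
    simp only [Equiv.permCongr_apply, hKapp, hJapp, Equiv.apply_symm_apply,
      Equiv.symm_apply_apply]
  refine ⟨⟨α, β, d₀, d₁⟩, ⟨hsα, hsβ, ⟨hd₀inv, hd₀fix⟩, hd₀rank, hfinal⟩, ?_⟩
  rintro ⟨α₁, β₁, d₀₁, d₁₁⟩ ⟨hsα₁, hsβ₁, hB₁, hr₁, heq₁⟩
  obtain ⟨specβ₁, specα₁⟩ := factor_spec f s d α₁ β₁ d₀₁ d₁₁ hB₁.1 hr₁ heq₁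
  have hβeq : β₁ = β := by
    apply shuffle_ext (by omega : 2 * f ≤ 2 * f + s) T β₁ β hsβ₁ hsβ
    · intro i
      rw [hTdef]
      simp only [Finset.mem_filter, Finset.mem_univ, true_and]
      exact specβ₁ i
    · intro i
      rw [hTdef]
      simp only [Finset.mem_filter, Finset.mem_univ, true_and]
      exact specβ i
  have hαeq : α₁ = α := by
    apply shuffle_ext (by omega : 2 * f ≤ 2 * f + s) B α₁ α hsα₁ hsα
    · intro i
      rw [hBdef]
      simp only [Finset.mem_filter, Finset.mem_univ, true_and]
      exact specα₁ i
    · intro i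
      rw [hBdef]
      simp only [Finset.mem_filter, Finset.mem_univ, true_and]
      exact specα i
  rw [hβeq, hαeq] at heq₁
  have hjuxeq : juxt d₀₁ (permDiag d₁₁) = juxt d₀ (permDiag d₁) :=
    (Equiv.sumCongr β α).permCongr.injective (heq₁.symm.trans hfinal)
  have hjux₁ : juxt d₀₁ (permDiag d₁₁) = E.permCongr (Equiv.sumCongr d₀₁ (permDiag d₁₁)) := by
    simp only [juxt, hEdef]
  have hjux₂ : juxt d₀ (permDiag d₁) = E.permCongr (Equiv.sumCongr d₀ (permDiag d₁)) := by
    simp only [juxt, hEdef]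
  have hsumeq : Equiv.sumCongr d₀₁ (permDiag d₁₁) = Equiv.sumCongr d₀ (permDiag d₁) := by
    apply E.permCongr.injective
    rw [← hjux₁, ← hjux₂]
    exact hjuxeq
  have hd₀eq : d₀₁ = d₀ := by
    apply Equiv.ext
    intro z
    have h6 := Equiv.ext_iff.mp hsumeq (Sum.inl z)
    simpa using h6
  have hd₁eq : d₁₁ = d₁ := by
    have hpeq : permDiag d₁₁ = permDiag d₁ := by
      apply Equiv.ext
      intro z
      have h6 := Equiv.ext_iff.mp hsumeq (Sum.inr z)
      simpa using h6
    apply Equiv.ext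
    intro i
    have h7 := Equiv.ext_iff.mp hpeq (Sum.inl i)
    rw [permDiag_inl, permDiag_inl] at h7
    exact inr_injective h7
  rw [hβeq, hαeq, hd₀eq, hd₁eq]
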